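/- Let L be a finite-dimensional Lie algebra over ℂ and let (e,h,f) be an sl₂-triple in L. Then every x ∈ L with ⁅e,x⁆ = 0 lies in the sum ⨆_{j ∈ ℕ} {y ∈ L : ⁅h,y⁆ = (j:ℂ) • y} of the eigenspaces of ad h for nonnegative integer eigenvalues; that is, all eigenvalues of ad h on the centralizer of e in L are nonnegative integers. -/

import Mathlib

open LieModule LieAlgebra Module

section Aux

variable {L : Type*} [LieRing L] [LieAlgebra ℂ L] [Module.Finite ℂ L]
variable {e h f : L}

/-- Invariance of the centralizer of `e` under `ad h`. -/
lemma aux_inv (hhe : ⁅h, e⁆ = (2 : ℂ) • e) {y : L} (hy : ⁅e, y⁆ = 0) :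
    ⁅e, ⁅h, y⁆⁆ = 0 := by
  have : ⁅e, ⁅h, y⁆⁆ = ⁅⁅e, h⁆, y⁆ + ⁅h, ⁅e, y⁆⁆ := by rw [leibniz_lie]
  rw [this, hy, lie_zero, add_zero, ← lie_skew e h, hhe, neg_lie, smul_lie, hy,
    smul_zero, neg_zero]

/-- Key lemma: there is no "generalized primitive vector of order exactly 2". -/
lemma aux_key (t : IsSl2Triple h e f) (n : ℕ) (y z : L)
    (hy : ⁅e, y⁆ = 0) (hze : ⁅e, z⁆ = 0)
    (hhy : ⁅h, y⁆ = (n : ℂ) • y + z) (hhz : ⁅h, z⁆ = (n : ℂ) • z)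
    (hz0 : z ≠ 0) : False := by
  classical
  have P : t.HasPrimitiveVectorWith z ((n : ℂ)) := ⟨hz0, hhz, hze⟩
  set F := toEnd ℂ L L f with hF
  -- notation
  set zz : ℕ → L := fun m => (F ^ m) z with hzz
  set yy : ℕ → L := fun m => (F ^ m) y with hyy
  have zz_succ : ∀ m, zz (m + 1) = ⁅f, zz m⁆ := by
    intro m; simp only [hzz, pow_succ', Module.End.mul_apply]; simp [hF]
  have yy_succ : ∀ m, yy (m + 1) = ⁅f, yy m⁆ := by
    intro m; simp only [hyy, pow_succ', Module.End.mul_apply]; simp [hF]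
  have zz_zero : zz 0 = z := by simp [hzz]
  have yy_zero : yy 0 = y := by simp [hyy]
  have hzn : ∀ m : ℕ, ⁅h, zz m⁆ = ((n : ℂ) - 2 * m) • zz m :=
    fun m => P.lie_h_pow_toEnd_f m
  have hzet : ∀ m : ℕ, ⁅e, zz (m + 1)⁆ = (((m : ℂ) + 1) * ((n : ℂ) - m)) • zz m :=
    fun m => P.lie_e_pow_succ_toEnd_f m
  have hztop : zz (n + 1) = 0 := P.pow_toEnd_f_eq_zero_of_eq_nat rfl
  have hznz : ∀ i ≤ n, zz i ≠ 0 := fun i hi => P.pow_toEnd_f_ne_zero_of_eq_nat rfl hi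
  have hzvanish : ∀ m, n + 1 ≤ m → zz m = 0 := by
    intro m hm
    obtain ⟨k, rfl⟩ := Nat.exists_eq_add_of_le hm
    induction k with
    | zero => exact hztop
    | succ k ih => rw [← Nat.add_assoc, zz_succ, ih (Nat.le_add_right _ _), lie_zero]
  -- the h-action on the yy chain
  have Hh : ∀ m : ℕ, ⁅h, yy m⁆ = ((n : ℂ) - 2 * m) • yy m + zz m := by
    intro m
    induction m with
    | zero => simpa [hyy, hzz] using hhy
    | succ m ih =>
      rw [yy_succ m, zz_succ m, leibniz_lie h f, t.lie_lie_smul_f ℂ, ih, neg_lie,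
        smul_lie, lie_add, lie_smul]
      push_cast
      match_scalars <;> ring
  -- the e-action on the yy chain
  have He : ∀ m : ℕ, ⁅e, yy (m + 1)⁆ =
      (((m : ℂ) + 1) * ((n : ℂ) - m)) • yy m + ((m : ℂ) + 1) • zz m := by
    intro m
    induction m with
    | zero =>
      rw [yy_succ 0, yy_zero, zz_zero, leibniz_lie e f, t.lie_e_f, hy, lie_zero,
        add_zero, hhy]
      push_cast
      match_scalars <;> ring
    | succ m ih =>
      rw [yy_succ (m + 1), leibniz_lie e f, t.lie_e_f, Hh (m + 1), ih,
        lie_add, lie_smul, lie_smul, ← yy_succ m, ← zz_succ m]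
      push_cast
      match_scalars <;> ring
  -- y is nonzero
  have hy0 : y ≠ 0 := by
    rintro rfl
    apply hz0
    simpa using hhy.symm
  -- eventually the yy chain vanishes
  have hyvanish : ∃ m, yy m = 0 := by
    by_contra hcon
    push_neg at hcon
    have li : LinearIndependent ℂ fun k : ℕ => yy (n + 1 + k) := by
      apply (ad ℂ L h).eigenvectors_linearIndependent'
        (fun k : ℕ => ((n : ℂ) - 2 * (n + 1 + k)))
        (fun k₁ k₂ hk => by
          have hk' : (n : ℂ) - 2 * (n + 1 + k₁) = n - 2 * (n + 1 + k₂) := hk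
          have hk'' : (k₁ : ℂ) = k₂ := by linear_combination (-1 / 2 : ℂ) * hk'
          exact_mod_cast hk'')
      intro k
      refine ⟨?_, hcon _⟩
      rw [Module.End.mem_eigenspace_iff, ad_apply, Hh (n + 1 + k),
        hzvanish _ (Nat.le_add_right _ _), add_zero]
      push_cast
      ring_nf
    have : Finite ℕ := li.finite
    exact not_finite ℕ
  obtain ⟨m, hm1, hm2⟩ :=
    Nat.exists_not_and_succ_of_not_zero_of_exists (by simpa [hyy] using hy0) hyvanish
  -- the crucial relation at the break point
  have hrel : 0 = (((m : ℂ) + 1) * ((n : ℂ) - m)) • yy m + ((m : ℂ) + 1) • zz m := by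
    rw [← He m, hm2, lie_zero]
  rcases lt_trichotomy m n with hmn | rfl | hmn
  · -- m < n : zz m would be a multiple of yy m, hence zero
    have hm1' : ((m : ℂ) + 1) ≠ 0 := Nat.cast_add_one_ne_zero m
    have hzm : zz m = (-((n : ℂ) - m)) • yy m := by
      have h1 : ((m : ℂ) + 1) • (((n : ℂ) - m) • yy m + zz m) = 0 := by
        rw [smul_add, smul_smul]; exact hrel.symm
      have h2 := (smul_eq_zero.mp h1).resolve_left hm1'
      rw [neg_smul]
      exact eq_neg_of_add_eq_zero_left (by rw [add_comm]; exact h2)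
    have h3 : ⁅h, zz m⁆ = ((n : ℂ) - 2 * m) • zz m + (-((n : ℂ) - m)) • zz m := by
      rw [hzm, lie_smul, Hh m, hzm]
      match_scalars <;> ring
    rw [hzn m] at h3
    have h4 : (-((n : ℂ) - m)) • zz m = 0 := (left_eq_add.mp h3)
    rcases smul_eq_zero.mp h4 with hc | hc
    · rw [neg_eq_zero, sub_eq_zero] at hc
      exact absurd (Nat.cast_injective hc) hmn.ne'
    · exact hznz m hmn.le hc
  · -- m = n : zz n = 0, contradiction
    apply hznz m le_rfl
    have hm1' : ((m : ℂ) + 1) ≠ 0 := Nat.cast_add_one_ne_zero m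
    have := hrel
    rw [sub_self, mul_zero, zero_smul, zero_add, eq_comm, smul_eq_zero] at this
    exact this.resolve_left hm1'
  · -- m > n : zz m = 0 and the coefficient is nonzero, so yy m = 0
    apply hm1
    have hzm : zz m = 0 := hzvanish m hmn
    rw [hzm, smul_zero, add_zero, eq_comm, smul_eq_zero] at hrel
    rcases hrel with hc | hc
    · exfalso
      rcases mul_eq_zero.mp hc with hc | hc
      · exact Nat.cast_add_one_ne_zero m hc
      · rw [sub_eq_zero] at hc
        exact hmn.ne (Nat.cast_injective hc)
    · exact hc

/-- `ad h` acts semisimply on the centralizer of `e`. -/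
lemma aux_semisimple (t : IsSl2Triple h e f) (hhe : ⁅h, e⁆ = (2 : ℂ) • e)
    (μ : ℂ) (k : ℕ) :
    ∀ y : L, ⁅e, y⁆ = 0 →
      ((LieAlgebra.ad ℂ L h - μ • (1 : Module.End ℂ L)) ^ k) y = 0 →
      ⁅h, y⁆ = μ • y := by
  induction k with
  | zero =>
    intro y _ hk
    simp only [pow_zero, Module.End.one_apply] at hk
    simp [hk]
  | succ k ih =>
    intro y hy hk
    set w : L := ⁅h, y⁆ - μ • y with hw
    have hDy : (LieAlgebra.ad ℂ L h - μ • (1 : Module.End ℂ L)) y = w := by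
      simp [hw, ad_apply]
    have hkw : ((LieAlgebra.ad ℂ L h - μ • (1 : Module.End ℂ L)) ^ k) w = 0 := by
      rw [← hDy, ← Module.End.mul_apply, ← pow_succ]
      exact hk
    have hwe : ⁅e, w⁆ = 0 := by
      rw [hw, lie_sub, lie_smul, hy, aux_inv hhe hy, smul_zero, sub_zero]
    have hhw : ⁅h, w⁆ = μ • w := ih w hwe hkw
    by_cases hw0 : w = 0
    · rw [hw, sub_eq_zero] at hw0
      exact hw0
    · exfalso
      obtain ⟨n, rfl⟩ := (IsSl2Triple.HasPrimitiveVectorWith.mk hw0 hhw hwe :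
        t.HasPrimitiveVectorWith w μ).exists_nat
      exact aux_key t n y w hy hwe (by rw [hw]; module) hhw hw0

end Aux

/-- Let `L` be a finite-dimensional Lie algebra over `ℂ` and let
`(e, h, f)` be an `sl₂`-triple in `L`.  Then every `x ∈ L` with `⁅e, x⁆ = 0` lies in
the sum of the eigenspaces of `ad h` for nonnegative integer eigenvalues; that is,
all eigenvalues of `ad h` on the centralizer of `e` in `L` are nonnegative integers. -/
theorem centralizer_in_nonneg_eigenspaces
    (L : Type*) [LieRing L] [LieAlgebra ℂ L] [Module.Finite ℂ L]
    (e h f : L) (he : e ≠ 0)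
    (hhe : ⁅h, e⁆ = (2 : ℂ) • e) (hhf : ⁅h, f⁆ = (-2 : ℂ) • f) (hef : ⁅e, f⁆ = h)
    (x : L) (hx : ⁅e, x⁆ = 0) :
    x ∈ ⨆ j : ℕ, Module.End.eigenspace (LieAlgebra.ad ℂ L h) (j : ℂ) := by
  classical
  have hh0 : h ≠ 0 := by
    rintro rfl
    rw [zero_lie] at hhe
    exact he (by simpa using hhe.symm)
  have t : IsSl2Triple h e f :=
    { h_ne_zero := hh0
      lie_e_f := hef
      lie_h_e_nsmul := by rw [hhe]; module
      lie_h_f_nsmul := by rw [hhf]; module }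
  set C : Submodule ℂ L := LinearMap.ker (LieAlgebra.ad ℂ L e) with hC
  have hmemC : ∀ u : L, u ∈ C ↔ ⁅e, u⁆ = 0 := by
    intro u; rw [hC, LinearMap.mem_ker, LieAlgebra.ad_apply]
  have hCinv : ∀ u ∈ C, (LieAlgebra.ad ℂ L h) u ∈ C := by
    intro u hu
    rw [hmemC] at hu ⊢
    rw [LieAlgebra.ad_apply]
    exact aux_inv hhe hu
  set A : Module.End ℂ C := (LieAlgebra.ad ℂ L h).restrict hCinv with hA
  -- restriction commutes with powers of (A - μ)
  have hres : ∀ (μ : ℂ) (k : ℕ) (y : C),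
      ((((A - μ • (1 : Module.End ℂ C)) ^ k) y : C) : L) =
        ((LieAlgebra.ad ℂ L h - μ • (1 : Module.End ℂ L)) ^ k) (y : L) := by
    intro μ k
    induction k with
    | zero => intro y; simp
    | succ k ih =>
      intro y
      rw [pow_succ, Module.End.mul_apply, pow_succ, Module.End.mul_apply,
        ih ((A - μ • (1 : Module.End ℂ C)) y)]
      congr 1
  -- each maximal generalized eigenspace of A lands in the target
  have hkey : ∀ μ : ℂ, Module.End.maxGenEigenspace A μ ≤
      (⨆ j : ℕ, Module.End.eigenspace (LieAlgebra.ad ℂ L h) (j : ℂ)).comap C.subtype := by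
    intro μ y hy
    rw [Module.End.mem_maxGenEigenspace] at hy
    obtain ⟨k, hk⟩ := hy
    have hk' : ((LieAlgebra.ad ℂ L h - μ • (1 : Module.End ℂ L)) ^ k) (y : L) = 0 := by
      rw [← hres μ k y, hk, Submodule.coe_zero]
    have hye : ⁅e, (y : L)⁆ = 0 := (hmemC _).mp y.2
    have hhy : ⁅h, (y : L)⁆ = μ • (y : L) := aux_semisimple t hhe μ k (y : L) hye hk'
    simp only [Submodule.mem_comap, Submodule.coe_subtype]
    by_cases hy0 : (y : L) = 0
    · rw [hy0]; exact Submodule.zero_mem _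
    · obtain ⟨n, rfl⟩ := (IsSl2Triple.HasPrimitiveVectorWith.mk hy0 hhy hye :
        t.HasPrimitiveVectorWith (y : L) μ).exists_nat
      refine Submodule.mem_iSup_of_mem n ?_
      rw [Module.End.mem_eigenspace_iff, LieAlgebra.ad_apply]
      exact hhy
  have hxC : x ∈ C := (hmemC x).mpr hx
  have htop : (⟨x, hxC⟩ : C) ∈ ⨆ μ : ℂ, Module.End.maxGenEigenspace A μ := by
    rw [Module.End.iSup_maxGenEigenspace_eq_top]
    trivial
  have := (iSup_le hkey) htop
  simpa using this
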